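/- Consider ℤ² with the supremum metric d_∞ and the measure μ with μ(n,m) = 4^{|m|} if n = 0 and μ(n,m) = 1 otherwise. Let f(n,m) = 2^n if n > 0 and m = 0, and f(n,m) = 0 otherwise. Then the non-centered maximal function satisfies Mf(1,0) = ∞. -/

import Mathlib

open MeasureTheory Metric Filter Set ENNReal

/-- The centered Hardy–Littlewood maximal function of `f` at `x`,
with respect to the measure `μ`. -/
noncomputable def centeredMaximal {X : Type*} [MeasurableSpace X] [PseudoMetricSpace X]
    (μ : Measure X) (f : X → ℝ) (x : X) : ℝ≥0∞ :=
  ⨆ (r : ℝ) (_ : 0 < r),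
    (∫⁻ y in Metric.ball x r, ENNReal.ofReal |f y| ∂μ) / μ (Metric.ball x r)

/-- The non-centered Hardy–Littlewood maximal function of `f` at `x`:
the supremum is taken over all open balls containing `x`. -/
noncomputable def noncenteredMaximal {X : Type*} [MeasurableSpace X] [PseudoMetricSpace X]
    (μ : Measure X) (f : X → ℝ) (x : X) : ℝ≥0∞ :=
  ⨆ (c : X) (r : ℝ) (_ : 0 < r) (_ : x ∈ Metric.ball c r),
    (∫⁻ y in Metric.ball c r, ENNReal.ofReal |f y| ∂μ) / μ (Metric.ball c r)

/-- `f ∈ L¹_loc(μ)`: `∫_B |f| dμ < ∞` for every open ball `B`. -/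
def LocallyIntegrableBall {X : Type*} [MeasurableSpace X] [PseudoMetricSpace X]
    (μ : Measure X) (f : X → ℝ) : Prop :=
  ∀ (c : X) (r : ℝ), 0 < r → (∫⁻ y in Metric.ball c r, ENNReal.ofReal |f y| ∂μ) < ⊤

lemma aux_sq_le_two_pow (k : ℕ) (hk : 9 ≤ k) : (2*k+1)^2 ≤ 2^k := by
  induction k, hk using Nat.le_induction with
  | base => norm_num
  | succ n hn ih =>
    calc (2*(n+1)+1)^2 ≤ 2*(2*n+1)^2 := by nlinarith
      _ ≤ 2*2^n := by omega
      _ = 2^(n+1) := by ring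

lemma aux_dist_iff (k : ℕ) (a b : ℤ) : dist a b < (k:ℝ) + 1/2 ↔ |a - b| ≤ k := by
  rw [Int.dist_eq, ← Int.cast_sub, ← Int.cast_abs]
  constructor
  · intro h
    have h2 : ((|a - b| : ℤ) : ℝ) < ((k:ℤ) : ℝ) + 1 := by push_cast; push_cast at h; linarith
    have h3 : |a - b| < (k:ℤ) + 1 := by exact_mod_cast h2
    exact Int.lt_add_one_iff.mp h3
  · intro h
    have : ((|a - b| : ℤ) : ℝ) ≤ ((k:ℤ) : ℝ) := by exact_mod_cast h
    push_cast at this ⊢; linarith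

private lemma aux_main (μ : Measure (ℤ × ℤ))
    (hμ : μ = Measure.count.withDensity
      (fun p : ℤ × ℤ => if p.1 = 0 then (4 : ℝ≥0∞) ^ p.2.natAbs else 1))
    (f : ℤ × ℤ → ℝ)
    (hf : f = fun p : ℤ × ℤ => if 0 < p.1 ∧ p.2 = 0 then (2 : ℝ) ^ p.1.toNat else 0) :
    (⨆ (c : ℤ × ℤ) (r : ℝ) (_ : 0 < r) (_ : ((1,0) : ℤ × ℤ) ∈ Metric.ball c r),
      (∫⁻ y in Metric.ball c r, ENNReal.ofReal |f y| ∂μ) / μ (Metric.ball c r)) = ⊤ := by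
  set w : ℤ × ℤ → ℝ≥0∞ := fun p : ℤ × ℤ => if p.1 = 0 then (4 : ℝ≥0∞) ^ p.2.natAbs else 1 with hw
  set g : ℤ × ℤ → ℝ≥0∞ := fun y => ENNReal.ofReal |f y| with hg
  rw [iSup_eq_top]
  intro b hb
  obtain ⟨n, hn⟩ := ENNReal.exists_nat_gt hb.ne
  set k : ℕ := max 9 n with hk
  have hk9 : 9 ≤ k := le_max_left _ _
  have hkn : n ≤ k := le_max_right _ _
  set c : ℤ × ℤ := ((k:ℤ) + 1, 0) with hc
  set r : ℝ := (k:ℝ) + 1/2 with hr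
  refine ⟨c, ?_⟩
  -- characterization of the ball
  have hball : ∀ p : ℤ × ℤ, p ∈ Metric.ball c r ↔ |p.1 - ((k:ℤ)+1)| ≤ k ∧ |p.2| ≤ k := by
    intro p
    rw [mem_ball, Prod.dist_eq, max_lt_iff, aux_dist_iff, aux_dist_iff]
    simp [hc]
  have hrpos : (0:ℝ) < r := by positivity
  have hmem : ((1,0) : ℤ × ℤ) ∈ Metric.ball c r := by
    rw [hball]
    constructor
    · rw [abs_le]; omega
    · simp
  -- measurability facts
  have hmsball : MeasurableSet (Metric.ball c r) := (Set.to_countable _).measurableSet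
  have hwm : Measurable w := measurable_of_countable w
  have hgm : Measurable g := measurable_of_countable g
  -- the enclosing finite box
  set F : Finset (ℤ × ℤ) := Finset.Icc 1 (2*(k:ℤ)+1) ×ˢ Finset.Icc (-(k:ℤ)) (k:ℤ) with hF
  have hsub : Metric.ball c r ⊆ (F : Set (ℤ × ℤ)) := by
    intro p hp
    rw [hball] at hp
    obtain ⟨h1, h2⟩ := hp
    rw [abs_le] at h1 h2
    simp only [hF, Finset.coe_product, Set.mem_prod, Finset.coe_Icc, Set.mem_Icc]
    omega
  have hcard : F.card = (2*k+1) * (2*k+1) := by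
    rw [hF, Finset.card_product, Int.card_Icc, Int.card_Icc]
    congr 1 <;> omega
  -- upper bound on the measure of the ball
  have hμball : μ (Metric.ball c r) ≤ (2:ℝ≥0∞)^k := by
    calc μ (Metric.ball c r) ≤ μ (F : Set (ℤ × ℤ)) := measure_mono hsub
      _ = ∫⁻ p in (F : Set (ℤ × ℤ)), w p ∂Measure.count := by
          rw [hμ, withDensity_apply _ F.measurableSet]
      _ ≤ ∫⁻ _ in (F : Set (ℤ × ℤ)), 1 ∂Measure.count := by
          refine setLIntegral_mono measurable_const (fun p hp => ?_)
          simp only [hF, Finset.coe_product, Set.mem_prod, Finset.coe_Icc, Set.mem_Icc] at hp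
          have : p.1 ≠ 0 := by omega
          simp [hw, this]
      _ = Measure.count (F : Set (ℤ × ℤ)) := setLIntegral_one _
      _ = F.card := Measure.count_apply_finset F
      _ = (((2*k+1) * (2*k+1) : ℕ) : ℝ≥0∞) := by rw [hcard]
      _ ≤ ((2^k : ℕ) : ℝ≥0∞) := by
          refine Nat.cast_le.mpr ?_
          calc (2*k+1) * (2*k+1) = (2*k+1)^2 := by ring
            _ ≤ 2^k := aux_sq_le_two_pow k hk9
      _ = (2:ℝ≥0∞)^k := by push_cast; ring
  -- lower bound on the integral
  set pt : ℤ × ℤ := (2*(k:ℤ)+1, 0) with hpt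
  have hptmem : pt ∈ Metric.ball c r := by
    rw [hball]
    constructor
    · rw [abs_le]; constructor <;> simp [hpt] <;> omega
    · simp [hpt]
  have hwgpt : (w * g) pt = (2:ℝ≥0∞)^(2*k+1) := by
    have h1 : w pt = 1 := by
      simp only [hw, hpt]
      rw [if_neg (by omega)]
    have h2 : g pt = (2:ℝ≥0∞)^(2*k+1) := by
      simp only [hg, hf, hpt]
      rw [if_pos ⟨by positivity, trivial⟩]
      rw [abs_of_nonneg (by positivity)]
      have : (2*(k:ℤ)+1).toNat = 2*k+1 := by omega
      rw [this, ENNReal.ofReal_pow (by norm_num)]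
      norm_num
    simp [Pi.mul_apply, h1, h2]
  have hint : (2:ℝ≥0∞)^(2*k+1) ≤ ∫⁻ y in Metric.ball c r, g y ∂μ := by
    calc (2:ℝ≥0∞)^(2*k+1) = (w * g) pt * Measure.count {pt} := by
          rw [Measure.count_singleton, hwgpt, mul_one]
      _ = ∫⁻ y in ({pt} : Set (ℤ × ℤ)), (w * g) y ∂Measure.count := (lintegral_singleton _ _).symm
      _ ≤ ∫⁻ y in Metric.ball c r, (w * g) y ∂Measure.count :=
          lintegral_mono_set (by intro x hx; simp only [Set.mem_singleton_iff] at hx; rw [hx]; exact hptmem)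
      _ = ∫⁻ y in Metric.ball c r, g y ∂μ := by
          rw [hμ, setLIntegral_withDensity_eq_setLIntegral_mul _ hwm hgm hmsball]
  -- combine
  have hratio : (2:ℝ≥0∞)^(k+1) ≤
      (∫⁻ y in Metric.ball c r, g y ∂μ) / μ (Metric.ball c r) := by
    rw [ENNReal.le_div_iff_mul_le (Or.inr ?h0) (Or.inl ?ht)]
    case h0 =>
      intro h
      rw [h] at hint
      simp at hint
    case ht =>
      exact ne_top_of_le_ne_top (pow_ne_top (by norm_num)) hμball
    calc (2:ℝ≥0∞)^(k+1) * μ (Metric.ball c r) ≤ (2:ℝ≥0∞)^(k+1) * (2:ℝ≥0∞)^k :=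
          mul_le_mul_right hμball _
      _ = (2:ℝ≥0∞)^(2*k+1) := by rw [← pow_add]; ring_nf
      _ ≤ _ := hint
  have hbound : b < (2:ℝ≥0∞)^(k+1) := by
    refine hn.trans_le ?_
    have h1 : (n:ℝ≥0∞) ≤ ((2^(k+1) : ℕ) : ℝ≥0∞) := by
      refine Nat.cast_le.mpr (le_of_lt ?_)
      calc n ≤ k := hkn
        _ < 2^k := Nat.lt_two_pow_self
        _ ≤ 2^(k+1) := Nat.pow_le_pow_right (by norm_num) (by omega)
    calc (n:ℝ≥0∞) ≤ ((2^(k+1) : ℕ) : ℝ≥0∞) := h1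
      _ = (2:ℝ≥0∞)^(k+1) := by push_cast; ring
  calc b < (2:ℝ≥0∞)^(k+1) := hbound
    _ ≤ (∫⁻ y in Metric.ball c r, g y ∂μ) / μ (Metric.ball c r) := hratio
    _ ≤ _ := by
      refine le_iSup_of_le r ?_
      rw [iSup_pos hrpos, iSup_pos hmem]

/-- On `ℤ²` with the supremum metric and measure with point weights
`μ(n,m) = 4^{|m|}` if `n = 0` and `1` otherwise, for `f(n,m) = 2^n` if `n > 0, m = 0`
and `0` otherwise, the non-centered maximal function satisfies `Mf(1,0) = ∞`. -/
theorem noncenteredMaximal_eq_top_at_one (μ : Measure (ℤ × ℤ))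
    (hμ : μ = Measure.count.withDensity
      (fun p : ℤ × ℤ => if p.1 = 0 then (4 : ℝ≥0∞) ^ p.2.natAbs else 1))
    (f : ℤ × ℤ → ℝ)
    (hf : f = fun p : ℤ × ℤ => if 0 < p.1 ∧ p.2 = 0 then (2 : ℝ) ^ p.1.toNat else 0) :
    noncenteredMaximal μ f ((1, 0) : ℤ × ℤ) = ⊤ := by
  unfold noncenteredMaximal
  exact aux_main μ hμ f hf
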